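/- arXiv:1404.0339 — 2 statements merged into one kernel-verified Lean document; each statement's English description precedes it below -/
import Mathlib

section
/- Let ε > 0 and let K ⊆ ℝⁿ be a measurable set with Gaussian measure γₙ(K) ≥ e^{-εn}. Then the set K_{3√(εn)} of points at Euclidean distance at most 3√(εn) from K has Gaussian measure γₙ(K_{3√(εn)}) ≥ 1 - e^{-εn}. -/
open MeasureTheory Real

noncomputable def gaussian (n : ℕ) : Measure (EuclideanSpace ℝ (Fin n)) :=
  volume.withDensity fun x =>
    ENNReal.ofReal ((2 * π) ^ (-(n : ℝ) / 2) * Real.exp (-‖x‖ ^ 2 / 2))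

open Set Pointwise
open scoped ENNReal NNReal

-- AM-GM in ENNReal
lemma ennreal_amgm (x y : ℝ≥0∞) : x * y ≤ ((x + y) / 2) ^ 2 := by
  rcases eq_or_ne x ⊤ with rfl | hx
  · have : (((⊤:ℝ≥0∞) + y) / 2) ^ 2 = ⊤ := by
      rw [show ((⊤:ℝ≥0∞) + y) = ⊤ by simp, ENNReal.top_div_of_ne_top (by norm_num)]
      simp
    rw [this]; exact le_top
  rcases eq_or_ne y ⊤ with rfl | hy
  · have : ((x + (⊤:ℝ≥0∞)) / 2) ^ 2 = ⊤ := by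
      rw [show (x + (⊤:ℝ≥0∞)) = ⊤ by simp, ENNReal.top_div_of_ne_top (by norm_num)]
      simp
    rw [this]; exact le_top
  lift x to ℝ≥0 using hx
  lift y to ℝ≥0 using hy
  have h2 : ((2:ℝ≥0∞)) = ((2:ℝ≥0):ℝ≥0∞) := by norm_num
  rw [← ENNReal.coe_add, h2, ← ENNReal.coe_div (by norm_num), ← ENNReal.coe_pow,
    ← ENNReal.coe_mul, ENNReal.coe_le_coe, ← NNReal.coe_le_coe]
  push_cast
  nlinarith [sq_nonneg ((x:ℝ) - y), x.coe_nonneg, y.coe_nonneg]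

-- sup of truncations
lemma isup_min_nat (a : ℝ≥0∞) : ⨆ n : ℕ, min a n = a := by
  apply le_antisymm (iSup_le fun n => min_le_left _ _)
  rcases eq_or_ne a ⊤ with rfl | ha
  · simp only [min_eq_right (le_top : (_:ℝ≥0∞) ≤ ⊤)]
    rw [ENNReal.iSup_natCast]
  · obtain ⟨n, hn⟩ := ENNReal.exists_nat_gt ha
    calc a = min a n := (min_eq_left hn.le).symm
      _ ≤ ⨆ n : ℕ, min a n := le_iSup (fun n : ℕ => min a (n:ℝ≥0∞)) n

-- layer cake for finite ENNReal-valued functions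
lemma layer_ennreal {α : Type*} [MeasurableSpace α] (μ : Measure α) (φ : α → ℝ≥0∞)
    (hφ : Measurable φ) (hfin : ∀ x, φ x ≠ ⊤) :
    ∫⁻ x, φ x ∂μ = ∫⁻ t in Set.Ioi (0:ℝ), μ {x | ENNReal.ofReal t < φ x} := by
  have h1 : ∫⁻ x, φ x ∂μ = ∫⁻ x, ENNReal.ofReal ((φ x).toReal) ∂μ :=
    lintegral_congr fun x => (ENNReal.ofReal_toReal (hfin x)).symm
  rw [h1, lintegral_eq_lintegral_meas_lt μ (ae_of_all _ fun x => ENNReal.toReal_nonneg)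
    hφ.ennreal_toReal.aemeasurable]
  apply setLIntegral_congr_fun measurableSet_Ioi
  intro t ht
  dsimp only
  congr 1
  ext x
  simp only [Set.mem_setOf_eq]
  exact (ENNReal.ofReal_lt_iff_lt_toReal (le_of_lt ht) (hfin x)).symm

-- change of variables for lintegral on Ioo
lemma cov_Ioo (φ : ℝ → ℝ≥0∞) (hφ : Measurable φ) (r L : ℝ) (hr : 0 < r) :
    ∫⁻ u in Set.Ioo 0 L, φ (r * u) = ENNReal.ofReal r⁻¹ * ∫⁻ t in Set.Ioo 0 (r * L), φ t := by
  set ψ := (Set.Ioo 0 (r*L)).indicator φ with hψdef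
  have hψm : Measurable ψ := hφ.indicator measurableSet_Ioo
  have key : ∀ u, (Set.Ioo 0 L).indicator (fun u => φ (r * u)) u = ψ (r * u) := by
    intro u
    by_cases hu : u ∈ Set.Ioo 0 L
    · rw [Set.indicator_of_mem hu, hψdef, Set.indicator_of_mem]
      exact ⟨mul_pos hr hu.1, (mul_lt_mul_iff_right₀ hr).mpr hu.2⟩
    · rw [Set.indicator_of_notMem hu, hψdef, Set.indicator_of_notMem]
      intro hmem
      apply hu
      constructor
      · have := hmem.1
        nlinarith [hmem.1]
      · have h2 := hmem.2
        nlinarith [hmem.2]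
  calc ∫⁻ u in Set.Ioo 0 L, φ (r * u)
      = ∫⁻ u, (Set.Ioo 0 L).indicator (fun u => φ (r * u)) u :=
        (lintegral_indicator measurableSet_Ioo _).symm
    _ = ∫⁻ u, ψ (r * u) := by simp_rw [key]
    _ = ∫⁻ t, ψ t ∂(Measure.map (r * ·) volume) :=
        (lintegral_map hψm (measurable_const_mul r)).symm
    _ = ENNReal.ofReal r⁻¹ * ∫⁻ t in Set.Ioo 0 (r * L), φ t := by
        rw [Real.map_volume_mul_left hr.ne', lintegral_smul_measure,
          abs_of_nonneg (inv_nonneg.mpr hr.le),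
          lintegral_indicator measurableSet_Ioo _, smul_eq_mul]

lemma half_smul_vol (b : ℝ) (s : Set ℝ) :
    volume ((fun x => (x + b) / 2) '' s) = volume s / 2 := by
  have himg : (fun x : ℝ => (x + b) / 2) '' s = (b / 2) +ᵥ ((2:ℝ)⁻¹ • s) := by
    ext y
    simp only [Set.mem_image, Set.mem_vadd_set, Set.mem_smul_set]
    constructor
    · rintro ⟨x, hx, rfl⟩
      refine ⟨2⁻¹ * x, ⟨x, hx, rfl⟩, ?_⟩
      show b / 2 + 2⁻¹ * x = (x + b) / 2
      ring
    · rintro ⟨z, ⟨x, hx, rfl⟩, rfl⟩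
      refine ⟨x, hx, ?_⟩
      show (x + b) / 2 = b / 2 + (2:ℝ)⁻¹ • x
      simp only [smul_eq_mul]
      ring
  rw [himg, measure_vadd]
  have := MeasureTheory.Measure.addHaar_smul (volume : Measure ℝ) (2:ℝ)⁻¹ s
  simp only [Module.finrank_self, pow_one] at this
  rw [this]
  rw [abs_of_nonneg (by norm_num : (0:ℝ) ≤ (2:ℝ)⁻¹)]
  rw [ENNReal.div_eq_inv_mul, ENNReal.ofReal_inv_of_pos (by norm_num : (0:ℝ) < 2)]
  norm_num

lemma sumset_measure_le (A B W : Set ℝ) (hW : MeasurableSet W)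
    (hAne : A.Nonempty) (hBne : B.Nonempty) (hA : MeasurableSet A) (hB : MeasurableSet B)
    (hsub : ∀ a ∈ A, ∀ b ∈ B, (a + b) / 2 ∈ W) :
    volume A / 2 + volume B / 2 ≤ volume W := by
  -- compact case first
  have compact_case : ∀ K₁ K₂ : Set ℝ, IsCompact K₁ → IsCompact K₂ → K₁.Nonempty →
      K₂.Nonempty → K₁ ⊆ A → K₂ ⊆ B → volume K₁ / 2 + volume K₂ / 2 ≤ volume W := by
    intro K₁ K₂ hc₁ hc₂ hn₁ hn₂ hs₁ hs₂
    set a := sSup K₁ with ha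
    set b := sInf K₂ with hb
    have haK : a ∈ K₁ := hc₁.sSup_mem hn₁
    have hbK : b ∈ K₂ := hc₂.sInf_mem hn₂
    set p := (a + b) / 2 with hp
    set C₁ := (fun x => (x + b) / 2) '' K₁ with hC₁
    set C₂ := (fun x => (x + a) / 2) '' K₂ with hC₂
    have hC₁W : C₁ ⊆ W := by rintro _ ⟨x, hx, rfl⟩; exact hsub x (hs₁ hx) b (hs₂ hbK)
    have hC₂W : C₂ ⊆ W := by
      rintro _ ⟨x, hx, rfl⟩
      have := hsub a (hs₁ haK) x (hs₂ hx)
      rwa [show (a + x) / 2 = (x + a) / 2 by ring] at this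
    have hC₁le : ∀ y ∈ C₁, y ≤ p := by
      rintro _ ⟨x, hx, rfl⟩
      have : x ≤ a := le_csSup hc₁.bddAbove hx
      rw [hp]; linarith
    have hC₂ge : ∀ y ∈ C₂, p ≤ y := by
      rintro _ ⟨x, hx, rfl⟩
      have : b ≤ x := csInf_le hc₂.bddBelow hx
      rw [hp]; linarith
    have hinter : C₁ ∩ C₂ ⊆ {p} := by
      rintro y ⟨h₁, h₂⟩
      exact le_antisymm (hC₁le y h₁) (hC₂ge y h₂)
    have hm₁ : MeasurableSet C₁ :=
      (hc₁.image (by continuity)).measurableSet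
    have hm₂ : MeasurableSet C₂ :=
      (hc₂.image (by continuity)).measurableSet
    have key : volume C₁ + volume C₂ = volume (C₁ ∪ C₂) + volume (C₁ ∩ C₂) :=
      (measure_union_add_inter' hm₁ C₂).symm
    have hint0 : volume (C₁ ∩ C₂) = 0 :=
      le_antisymm (le_trans (measure_mono hinter) (by simp)) bot_le
    have : volume C₁ + volume C₂ ≤ volume W := by
      rw [key, hint0, add_zero]
      exact measure_mono (Set.union_subset hC₁W hC₂W)
    calc volume K₁ / 2 + volume K₂ / 2 = volume C₁ + volume C₂ := by
          rw [hC₁, hC₂, half_smul_vol, half_smul_vol]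
      _ ≤ volume W := this
  -- infinite cases
  rcases eq_or_ne (volume A) ⊤ with hAinf | hAfin
  · obtain ⟨b, hb⟩ := hBne
    have : volume ((fun x => (x + b) / 2) '' A) ≤ volume W := by
      apply measure_mono
      rintro _ ⟨x, hx, rfl⟩
      exact hsub x hx b hb
    rw [half_smul_vol, hAinf] at this
    simp only [ENNReal.top_div_of_ne_top (by norm_num : (2:ℝ≥0∞) ≠ ⊤)] at this
    rw [hAinf]
    simp [ENNReal.top_div_of_ne_top, top_le_iff.mp this]
  rcases eq_or_ne (volume B) ⊤ with hBinf | hBfin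
  · obtain ⟨a, ha⟩ := hAne
    have : volume ((fun x => (x + a) / 2) '' B) ≤ volume W := by
      apply measure_mono
      rintro _ ⟨x, hx, rfl⟩
      have := hsub a ha x hx
      rwa [show (a + x) / 2 = (x + a) / 2 by ring] at this
    rw [half_smul_vol, hBinf] at this
    simp only [ENNReal.top_div_of_ne_top (by norm_num : (2:ℝ≥0∞) ≠ ⊤)] at this
    rw [hBinf]
    simp [ENNReal.top_div_of_ne_top, top_le_iff.mp this]
  -- finite case: approximate by compacts
  apply ENNReal.le_of_forall_pos_le_add
  intro ε hε hWfin
  obtain ⟨K₁, hK₁A, hK₁c, hK₁v⟩ := hA.exists_isCompact_lt_add hAfin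
    (ε := (ε : ℝ≥0∞) / 2) (by simp [hε.ne', ENNReal.div_eq_zero_iff])
  obtain ⟨K₂, hK₂B, hK₂c, hK₂v⟩ := hB.exists_isCompact_lt_add hBfin
    (ε := (ε : ℝ≥0∞) / 2) (by simp [hε.ne', ENNReal.div_eq_zero_iff])
  obtain ⟨a, ha⟩ := hAne
  obtain ⟨b, hb⟩ := hBne
  set K₁' := K₁ ∪ {a} with hK₁'
  set K₂' := K₂ ∪ {b} with hK₂'
  have h1 : volume K₁ / 2 + volume K₂ / 2 ≤ volume W :=
    le_trans (add_le_add (ENNReal.div_le_div_right (measure_mono Set.subset_union_left) 2)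
      (ENNReal.div_le_div_right (measure_mono Set.subset_union_left) 2))
      (compact_case K₁' K₂' (hK₁c.union isCompact_singleton) (hK₂c.union isCompact_singleton)
        (Set.Nonempty.inr ⟨a, rfl⟩) (Set.Nonempty.inr ⟨b, rfl⟩)
        (Set.union_subset hK₁A (by simpa using ha)) (Set.union_subset hK₂B (by simpa using hb)))
  have h2 : volume A / 2 + volume B / 2 ≤ volume K₁ / 2 + volume K₂ / 2 + ε := by
    have e1 : volume A / 2 ≤ volume K₁ / 2 + ε / 2 := by
      calc volume A / 2 ≤ (volume K₁ + ε / 2) / 2 :=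
            ENNReal.div_le_div_right hK₁v.le 2
        _ ≤ volume K₁ / 2 + ε / 2 := by
            rw [ENNReal.add_div]
            gcongr
            exact ENNReal.half_le_self
    have e2 : volume B / 2 ≤ volume K₂ / 2 + ε / 2 := by
      calc volume B / 2 ≤ (volume K₂ + ε / 2) / 2 :=
            ENNReal.div_le_div_right hK₂v.le 2
        _ ≤ volume K₂ / 2 + ε / 2 := by
            rw [ENNReal.add_div]
            gcongr
            exact ENNReal.half_le_self
    calc volume A / 2 + volume B / 2 ≤ (volume K₁ / 2 + ε / 2) + (volume K₂ / 2 + ε / 2) :=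
          add_le_add e1 e2
      _ = volume K₁ / 2 + volume K₂ / 2 + ε := by
          rw [show (volume K₁ / 2 + ↑ε / 2) + (volume K₂ / 2 + ↑ε / 2)
              = volume K₁ / 2 + volume K₂ / 2 + (↑ε / 2 + ↑ε / 2) by ring,
            ENNReal.add_halves]
  exact le_trans h2 (add_le_add_left h1 ε)

lemma PL_dim1_bounded (h f g : ℝ → ℝ≥0∞) (hh : Measurable h)
    (hf : Measurable f) (hg : Measurable g) (N M : ℕ)
    (hfN : ∀ x, f x ≤ N) (hgM : ∀ y, g y ≤ M)
    (hyp : ∀ x y, f x * g y ≤ h ((x + y) / 2) ^ 2) :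
    (∫⁻ x, f x) * ∫⁻ y, g y ≤ (∫⁻ z, h z) ^ 2 := by
  have hffin : ∀ x, f x ≠ ⊤ := fun x => ne_top_of_le_ne_top (ENNReal.natCast_ne_top N) (hfN x)
  have hgfin : ∀ y, g y ≠ ⊤ := fun y => ne_top_of_le_ne_top (ENNReal.natCast_ne_top M) (hgM y)
  set S := essSup f volume with hSdef
  set T := essSup g volume with hTdef
  have hSN : S ≠ ⊤ :=
    ne_top_of_le_ne_top (ENNReal.natCast_ne_top N) (essSup_le_of_ae_le _ (ae_of_all _ hfN))
  have hTM : T ≠ ⊤ :=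
    ne_top_of_le_ne_top (ENNReal.natCast_ne_top M) (essSup_le_of_ae_le _ (ae_of_all _ hgM))
  rcases eq_or_ne S 0 with hS0 | hS0
  · have : ∫⁻ x, f x = 0 := (lintegral_eq_zero_iff hf).mpr (ENNReal.essSup_eq_zero_iff.mp hS0)
    simp [this]
  rcases eq_or_ne T 0 with hT0 | hT0
  · have : ∫⁻ y, g y = 0 := (lintegral_eq_zero_iff hg).mpr (ENNReal.essSup_eq_zero_iff.mp hT0)
    simp [this]
  set c := S.toReal with hcdef
  set d := T.toReal with hddef
  have hc : 0 < c := ENNReal.toReal_pos hS0 hSN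
  have hd : 0 < d := ENNReal.toReal_pos hT0 hTM
  set r := Real.sqrt (c / d) with hrdef
  have hrpos : 0 < r := Real.sqrt_pos.mpr (div_pos hc hd)
  set L := Real.sqrt (c * d) with hLdef
  have hL : 0 < L := Real.sqrt_pos.mpr (mul_pos hc hd)
  have hrL : r * L = c := by
    rw [hrdef, hLdef, ← Real.sqrt_mul (div_pos hc hd).le,
      show c / d * (c * d) = c ^ 2 by field_simp, Real.sqrt_sq hc.le]
  have hLr : r⁻¹ * L = d := by
    rw [hrdef, hLdef, ← Real.sqrt_inv, ← Real.sqrt_mul (by positivity),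
      show (c / d)⁻¹ * (c * d) = d ^ 2 by field_simp, Real.sqrt_sq hd.le]
  -- superlevel measure functions
  set F := fun t : ℝ => volume {x | ENNReal.ofReal t < f x} with hFdef
  set G := fun t : ℝ => volume {y | ENNReal.ofReal t < g y} with hGdef
  set H := fun t : ℝ => volume {z | ENNReal.ofReal t < h z} with hHdef
  have hFanti : Antitone F := fun s t hst =>
    measure_mono fun x hx => lt_of_le_of_lt (ENNReal.ofReal_le_ofReal hst) hx
  have hGanti : Antitone G := fun s t hst =>
    measure_mono fun x hx => lt_of_le_of_lt (ENNReal.ofReal_le_ofReal hst) hx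
  have hHanti : Antitone H := fun s t hst =>
    measure_mono fun x hx => lt_of_le_of_lt (ENNReal.ofReal_le_ofReal hst) hx
  have hFm : Measurable F := hFanti.measurable
  have hGm : Measurable G := hGanti.measurable
  have hHm : Measurable H := hHanti.measurable
  -- vanishing above the essential sup
  have hFzero : ∀ t, c ≤ t → F t = 0 := by
    intro t ht
    have h0 : volume {x | S < f x} = 0 := by
      have := ENNReal.ae_le_essSup f (μ := volume)
      rw [ae_iff] at this
      simpa [not_le] using this
    apply measure_mono_null _ h0
    intro x hx
    simp only [Set.mem_setOf_eq] at hx ⊢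
    refine lt_of_le_of_lt ?_ hx
    rw [← ENNReal.ofReal_toReal hSN]
    exact ENNReal.ofReal_le_ofReal ht
  have hGzero : ∀ t, d ≤ t → G t = 0 := by
    intro t ht
    have h0 : volume {y | T < g y} = 0 := by
      have := ENNReal.ae_le_essSup g (μ := volume)
      rw [ae_iff] at this
      simpa [not_le] using this
    apply measure_mono_null _ h0
    intro x hx
    simp only [Set.mem_setOf_eq] at hx ⊢
    refine lt_of_le_of_lt ?_ hx
    rw [← ENNReal.ofReal_toReal hTM]
    exact ENNReal.ofReal_le_ofReal ht
  -- positivity below the essential sup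
  have hFpos : ∀ t, 0 ≤ t → t < c → F t ≠ 0 := by
    intro t ht htc h0
    have hle : S ≤ ENNReal.ofReal t := by
      refine essSup_le_of_ae_le _ ?_
      show ∀ᵐ x ∂(volume : Measure ℝ), f x ≤ ENNReal.ofReal t
      rw [ae_iff]
      simpa [not_le] using h0
    have : c ≤ t := by
      have := ENNReal.toReal_mono ENNReal.ofReal_ne_top hle
      rwa [ENNReal.toReal_ofReal ht] at this
    linarith
  have hGpos : ∀ t, 0 ≤ t → t < d → G t ≠ 0 := by
    intro t ht htc h0
    have hle : T ≤ ENNReal.ofReal t := by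
      refine essSup_le_of_ae_le _ ?_
      show ∀ᵐ y ∂(volume : Measure ℝ), g y ≤ ENNReal.ofReal t
      rw [ae_iff]
      simpa [not_le] using h0
    have : d ≤ t := by
      have := ENNReal.toReal_mono ENNReal.ofReal_ne_top hle
      rwa [ENNReal.toReal_ofReal ht] at this
    linarith
  -- layer cake restricted to bounded interval
  have hfLC : ∫⁻ x, f x = ∫⁻ t in Set.Ioo 0 c, F t := by
    rw [layer_ennreal volume f hf hffin]
    rw [← lintegral_indicator measurableSet_Ioi, ← lintegral_indicator measurableSet_Ioo]
    apply lintegral_congr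
    intro t
    by_cases h1 : t ∈ Set.Ioo (0:ℝ) c
    · rw [Set.indicator_of_mem (Set.mem_Ioi.mpr h1.1), Set.indicator_of_mem h1]
    · by_cases h2 : t ∈ Set.Ioi (0:ℝ)
      · rw [Set.indicator_of_mem h2, Set.indicator_of_notMem h1]
        apply hFzero
        by_contra hct
        exact h1 ⟨h2, by linarith⟩
      · rw [Set.indicator_of_notMem h2, Set.indicator_of_notMem h1]
  have hgLC : ∫⁻ y, g y = ∫⁻ t in Set.Ioo 0 d, G t := by
    rw [layer_ennreal volume g hg hgfin]
    rw [← lintegral_indicator measurableSet_Ioi, ← lintegral_indicator measurableSet_Ioo]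
    apply lintegral_congr
    intro t
    by_cases h1 : t ∈ Set.Ioo (0:ℝ) d
    · rw [Set.indicator_of_mem (Set.mem_Ioi.mpr h1.1), Set.indicator_of_mem h1]
    · by_cases h2 : t ∈ Set.Ioi (0:ℝ)
      · rw [Set.indicator_of_mem h2, Set.indicator_of_notMem h1]
        apply hGzero
        by_contra hct
        exact h1 ⟨h2, by linarith⟩
      · rw [Set.indicator_of_notMem h2, Set.indicator_of_notMem h1]
  -- lower bound on ∫⁻ h
  have hhLB : ∫⁻ t in Set.Ioo 0 L, H t ≤ ∫⁻ z, h z := by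
    set h' := fun z => min (h z) (ENNReal.ofReal L) with hh'def
    have hh'm : Measurable h' := hh.min measurable_const
    have hh'fin : ∀ z, h' z ≠ ⊤ :=
      fun z => ne_top_of_le_ne_top ENNReal.ofReal_ne_top (min_le_right _ _)
    calc ∫⁻ t in Set.Ioo 0 L, H t
        = ∫⁻ t in Set.Ioo 0 L, volume {z | ENNReal.ofReal t < h' z} := by
          apply setLIntegral_congr_fun measurableSet_Ioo
          intro t ht
          dsimp only
          have hset : {z : ℝ | ENNReal.ofReal t < h' z} = {z : ℝ | ENNReal.ofReal t < h z} := by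
            ext z
            simp only [Set.mem_setOf_eq, hh'def, lt_min_iff]
            constructor
            · rintro ⟨hz, _⟩
              exact hz
            · intro hz
              exact ⟨hz, (ENNReal.ofReal_lt_ofReal_iff hL).mpr ht.2⟩
          rw [hset]
      _ ≤ ∫⁻ t in Set.Ioi 0, volume {z | ENNReal.ofReal t < h' z} :=
          lintegral_mono_set Set.Ioo_subset_Ioi_self
      _ = ∫⁻ z, h' z := (layer_ennreal volume h' hh'm hh'fin).symm
      _ ≤ ∫⁻ z, h z := lintegral_mono fun z => min_le_left _ _
  -- pointwise sumset bound
  have main : ∀ u ∈ Set.Ioo (0:ℝ) L, F (r * u) / 2 + G (r⁻¹ * u) / 2 ≤ H u := by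
    intro u hu
    have hru : 0 < r * u := mul_pos hrpos hu.1
    have hriu : 0 < r⁻¹ * u := mul_pos (inv_pos.mpr hrpos) hu.1
    have hruc : r * u < c := by
      rw [← hrL]
      exact (mul_lt_mul_iff_right₀ hrpos).mpr hu.2
    have hriud : r⁻¹ * u < d := by
      rw [← hLr]
      exact (mul_lt_mul_iff_right₀ (inv_pos.mpr hrpos)).mpr hu.2
    apply sumset_measure_le _ _ _ (measurableSet_lt measurable_const hh)
      (nonempty_of_measure_ne_zero (hFpos _ hru.le hruc))
      (nonempty_of_measure_ne_zero (hGpos _ hriu.le hriud))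
      (measurableSet_lt measurable_const hf)
      (measurableSet_lt measurable_const hg)
    intro a ha b hb
    simp only [Set.mem_setOf_eq] at ha hb ⊢
    by_contra hcon
    push_neg at hcon
    have h2 : h ((a + b) / 2) ^ 2 ≤ ENNReal.ofReal u ^ 2 := by
      rw [pow_two, pow_two]
      exact mul_le_mul' hcon hcon
    have h3 : ENNReal.ofReal u ^ 2 = ENNReal.ofReal (r * u) * ENNReal.ofReal (r⁻¹ * u) := by
      rw [← ENNReal.ofReal_mul (by positivity)]
      rw [pow_two, ← ENNReal.ofReal_mul hu.1.le]
      congr 1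
      rw [show r * u * (r⁻¹ * u) = (r * r⁻¹) * (u * u) by ring, mul_inv_cancel₀ hrpos.ne',
        one_mul]
    have h4 : ENNReal.ofReal (r * u) * ENNReal.ofReal (r⁻¹ * u) < f a * g b := by
      calc ENNReal.ofReal (r * u) * ENNReal.ofReal (r⁻¹ * u)
          < f a * ENNReal.ofReal (r⁻¹ * u) := by
            apply ENNReal.mul_lt_mul_left (by
              simp only [ne_eq, ENNReal.ofReal_eq_zero, not_le]; exact hriu) ENNReal.ofReal_ne_top ha
        _ ≤ f a * g b := mul_le_mul_right hb.le _
    have := lt_of_lt_of_le h4 (le_trans (hyp a b) (h2.trans h3.le))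
    exact lt_irrefl _ this
  -- integrate the pointwise bound
  have int1 : ∫⁻ u in Set.Ioo 0 L, (F (r * u) / 2 + G (r⁻¹ * u) / 2) ≤ ∫⁻ z, h z := by
    refine le_trans ?_ hhLB
    apply setLIntegral_mono hHm
    exact main
  have int2 : (ENNReal.ofReal r⁻¹ * ∫⁻ x, f x) / 2 + (ENNReal.ofReal r * ∫⁻ y, g y) / 2
      ≤ ∫⁻ z, h z := by
    refine le_trans (le_of_eq ?_) int1
    have e1 : ∫⁻ u in Set.Ioo 0 L, F (r * u) = ENNReal.ofReal r⁻¹ * ∫⁻ x, f x := by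
      rw [cov_Ioo F hFm r L hrpos, hrL, hfLC]
    have e2 : ∫⁻ u in Set.Ioo 0 L, G (r⁻¹ * u) = ENNReal.ofReal r * ∫⁻ y, g y := by
      rw [cov_Ioo G hGm r⁻¹ L (inv_pos.mpr hrpos), hLr, inv_inv, hgLC]
    have hFrm : Measurable fun u => F (r * u) := hFm.comp (measurable_const_mul r)
    have hGrm : Measurable fun u => G (r⁻¹ * u) := hGm.comp (measurable_const_mul r⁻¹)
    calc (ENNReal.ofReal r⁻¹ * ∫⁻ x, f x) / 2 + (ENNReal.ofReal r * ∫⁻ y, g y) / 2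
        = 2⁻¹ * (∫⁻ u in Set.Ioo 0 L, F (r * u)) + 2⁻¹ * (∫⁻ u in Set.Ioo 0 L, G (r⁻¹ * u)) := by
          rw [e1, e2, ENNReal.div_eq_inv_mul, ENNReal.div_eq_inv_mul]
      _ = (∫⁻ u in Set.Ioo 0 L, 2⁻¹ * F (r * u))
            + ∫⁻ u in Set.Ioo 0 L, 2⁻¹ * G (r⁻¹ * u) := by
          rw [← lintegral_const_mul 2⁻¹ hFrm, ← lintegral_const_mul 2⁻¹ hGrm]
      _ = ∫⁻ u in Set.Ioo 0 L, (2⁻¹ * F (r * u) + 2⁻¹ * G (r⁻¹ * u)) := by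
          rw [lintegral_add_left (hFrm.const_mul 2⁻¹)]
      _ = ∫⁻ u in Set.Ioo 0 L, (F (r * u) / 2 + G (r⁻¹ * u) / 2) := by
          apply lintegral_congr
          intro u
          rw [ENNReal.div_eq_inv_mul, ENNReal.div_eq_inv_mul]
  -- conclude via AM-GM
  have hcancel : ENNReal.ofReal r⁻¹ * ENNReal.ofReal r = 1 := by
    rw [← ENNReal.ofReal_mul (inv_nonneg.mpr hrpos.le), inv_mul_cancel₀ hrpos.ne',
      ENNReal.ofReal_one]
  set A := ENNReal.ofReal r⁻¹ * ∫⁻ x, f x with hAdef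
  set B := ENNReal.ofReal r * ∫⁻ y, g y with hBdef
  calc (∫⁻ x, f x) * ∫⁻ y, g y
      = A * B := by
        rw [hAdef, hBdef,
          show ENNReal.ofReal r⁻¹ * (∫⁻ x, f x) * (ENNReal.ofReal r * ∫⁻ y, g y)
            = (ENNReal.ofReal r⁻¹ * ENNReal.ofReal r) * ((∫⁻ x, f x) * ∫⁻ y, g y) by ring,
          hcancel, one_mul]
    _ ≤ ((A + B) / 2) ^ 2 := ennreal_amgm A B
    _ ≤ (∫⁻ z, h z) ^ 2 := by
        have : (A + B) / 2 ≤ ∫⁻ z, h z := by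
          rw [ENNReal.add_div]
          exact int2
        rw [pow_two, pow_two]
        exact mul_le_mul' this this

lemma PL_dim1 (h f g : ℝ → ℝ≥0∞) (hh : Measurable h) (hf : Measurable f) (hg : Measurable g)
    (hyp : ∀ x y, f x * g y ≤ h ((x + y) / 2) ^ 2) :
    (∫⁻ x, f x) * ∫⁻ y, g y ≤ (∫⁻ z, h z) ^ 2 := by
  have key : ∀ N M : ℕ, (∫⁻ x, min (f x) N) * (∫⁻ y, min (g y) M) ≤ (∫⁻ z, h z) ^ 2 := by
    intro N M
    apply PL_dim1_bounded h _ _ hh (hf.min measurable_const) (hg.min measurable_const) N M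
      (fun x => min_le_right _ _) (fun y => min_le_right _ _)
    intro x y
    exact le_trans (mul_le_mul' (min_le_left _ _) (min_le_left _ _)) (hyp x y)
  have hmono : ∀ (φ : ℝ → ℝ≥0∞), Monotone fun n : ℕ => fun x => min (φ x) n := by
    intro φ n m hnm x
    exact min_le_min le_rfl (Nat.cast_le.mpr hnm)
  have hfsup : ∫⁻ x, f x = ⨆ n : ℕ, ∫⁻ x, min (f x) n := by
    rw [← lintegral_iSup (fun n => hf.min measurable_const) (hmono f)]
    exact lintegral_congr fun x => (isup_min_nat (f x)).symm
  have hgsup : ∫⁻ y, g y = ⨆ m : ℕ, ∫⁻ y, min (g y) m := by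
    rw [← lintegral_iSup (fun m => hg.min measurable_const) (hmono g)]
    exact lintegral_congr fun y => (isup_min_nat (g y)).symm
  rw [hfsup, hgsup, ENNReal.iSup_mul]
  apply iSup_le
  intro n
  rw [ENNReal.mul_iSup]
  exact iSup_le fun m => key n m

def PLprop (α : Type*) [MeasurableSpace α] [AddCommMonoid α] [SMul ℝ α] (μ : Measure α) : Prop :=
  ∀ f g h : α → ℝ≥0∞, Measurable f → Measurable g → Measurable h →
    (∀ x y, f x * g y ≤ h ((2:ℝ)⁻¹ • (x + y)) ^ 2) →
    (∫⁻ x, f x ∂μ) * (∫⁻ y, g y ∂μ) ≤ (∫⁻ z, h z ∂μ) ^ 2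

lemma plprop_real : PLprop ℝ volume := by
  intro f g h hf hg hh hyp
  apply PL_dim1 h f g hh hf hg
  intro x y
  have : (x + y) / 2 = (2:ℝ)⁻¹ • (x + y) := by
    rw [smul_eq_mul]; ring
  rw [this]
  exact hyp x y

lemma plprop_prod {α β : Type*} [MeasurableSpace α] [AddCommMonoid α] [SMul ℝ α]
    [MeasurableSpace β] [AddCommMonoid β] [SMul ℝ β]
    (μ : Measure α) (ν : Measure β) [SFinite ν]
    (hμ : PLprop α μ) (hν : PLprop β ν) : PLprop (α × β) (μ.prod ν) := by
  intro f g h hf hg hh hyp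
  set F := fun a => ∫⁻ b, f (a, b) ∂ν with hFdef
  set G := fun a => ∫⁻ b, g (a, b) ∂ν with hGdef
  set H := fun a => ∫⁻ b, h (a, b) ∂ν with hHdef
  have hFm : Measurable F := hf.lintegral_prod_right'
  have hGm : Measurable G := hg.lintegral_prod_right'
  have hHm : Measurable H := hh.lintegral_prod_right'
  have hyp' : ∀ a a', F a * G a' ≤ H ((2:ℝ)⁻¹ • (a + a')) ^ 2 := by
    intro a a'
    apply hν (fun b => f (a, b)) (fun b => g (a', b)) (fun b => h ((2:ℝ)⁻¹ • (a + a'), b))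
      (hf.comp measurable_prodMk_left) (hg.comp measurable_prodMk_left)
      (hh.comp measurable_prodMk_left)
    intro b b'
    have := hyp (a, b) (a', b')
    simpa using this
  calc (∫⁻ x, f x ∂μ.prod ν) * ∫⁻ y, g y ∂μ.prod ν
      = (∫⁻ a, F a ∂μ) * ∫⁻ a, G a ∂μ := by
        rw [lintegral_prod f hf.aemeasurable, lintegral_prod g hg.aemeasurable]
    _ ≤ (∫⁻ a, H a ∂μ) ^ 2 := hμ F G H hFm hGm hHm hyp'
    _ = (∫⁻ z, h z ∂μ.prod ν) ^ 2 := by rw [lintegral_prod h hh.aemeasurable]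

lemma plprop_transfer {α β : Type*} [MeasurableSpace α] [AddCommMonoid α] [SMul ℝ α]
    [MeasurableSpace β] [AddCommMonoid β] [SMul ℝ β]
    (μ : Measure α) (ν : Measure β) (e : α ≃ᵐ β) (hpres : MeasurePreserving e μ ν)
    (hmid : ∀ x y : α, e ((2:ℝ)⁻¹ • (x + y)) = (2:ℝ)⁻¹ • (e x + e y))
    (hμ : PLprop α μ) : PLprop β ν := by
  intro f g h hf hg hh hyp
  have e1 : ∫⁻ y, f y ∂ν = ∫⁻ x, f (e x) ∂μ := (hpres.lintegral_comp hf).symm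
  have e2 : ∫⁻ y, g y ∂ν = ∫⁻ x, g (e x) ∂μ := (hpres.lintegral_comp hg).symm
  have e3 : ∫⁻ y, h y ∂ν = ∫⁻ x, h (e x) ∂μ := (hpres.lintegral_comp hh).symm
  rw [e1, e2, e3]
  apply hμ _ _ _ (hf.comp e.measurable) (hg.comp e.measurable) (hh.comp e.measurable)
  intro x y
  have := hyp (e x) (e y)
  rwa [← hmid] at this

lemma plprop_pi (n : ℕ) : PLprop (Fin n → ℝ) volume := by
  induction n with
  | zero =>
    intro f g h hf hg hh hyp
    have huniv : volume (Set.univ : Set (Fin 0 → ℝ)) = 1 := by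
      simp [volume_pi]
    have hconst : ∀ (φ : (Fin 0 → ℝ) → ℝ≥0∞), ∫⁻ x, φ x = φ (fun i => i.elim0) := by
      intro φ
      have : φ = fun _ => φ (fun i => i.elim0) := by
        funext x
        congr 1
        exact Subsingleton.elim _ _
      rw [this, lintegral_const, huniv, mul_one]
    rw [hconst f, hconst g, hconst h]
    have := hyp (fun i => i.elim0) (fun i => i.elim0)
    rwa [show (2:ℝ)⁻¹ • ((fun i : Fin 0 => i.elim0) + fun i : Fin 0 => i.elim0)
      = (fun i : Fin 0 => (i.elim0 : ℝ)) from Subsingleton.elim _ _] at this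
  | succ n ih =>
    have hprod : PLprop (ℝ × (Fin n → ℝ)) volume := by
      have := plprop_prod volume volume plprop_real ih
      rwa [← MeasureTheory.Measure.volume_eq_prod] at this
    set E := MeasurableEquiv.piFinSuccAbove (fun _ : Fin (n + 1) => ℝ) 0 with hEdef
    have hpres : MeasurePreserving E.symm volume volume :=
      (volume_preserving_piFinSuccAbove (fun _ : Fin (n + 1) => ℝ) 0).symm E
    have hlin : ∀ u v : Fin (n + 1) → ℝ, E ((2:ℝ)⁻¹ • (u + v)) = (2:ℝ)⁻¹ • (E u + E v) := by
      intro u v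
      rfl
    apply plprop_transfer _ _ E.symm hpres _ hprod
    intro x y
    apply E.injective
    rw [E.apply_symm_apply, hlin, E.apply_symm_apply, E.apply_symm_apply]

lemma plprop_euclidean (n : ℕ) : PLprop (EuclideanSpace ℝ (Fin n)) volume := by
  apply plprop_transfer _ _ (MeasurableEquiv.toLp 2 (Fin n → ℝ))
    (EuclideanSpace.volume_preserving_symm_measurableEquiv_toLp (Fin n)).symm
    (fun x y => rfl) (plprop_pi n)

-- Gaussian lintegral
lemma lintegral_gauss (n : ℕ) :
    ∫⁻ x : EuclideanSpace ℝ (Fin n), ENNReal.ofReal (Real.exp (-‖x‖ ^ 2 / 2))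
      = ENNReal.ofReal ((2 * π) ^ ((n : ℝ) / 2)) := by
  have hint : Integrable (fun x : EuclideanSpace ℝ (Fin n) => Real.exp (-(2⁻¹:ℝ) * ‖x‖ ^ 2)) := by
    have hc : Integrable (fun v : EuclideanSpace ℝ (Fin n) =>
        Complex.exp (-(2⁻¹:ℂ) * ‖v‖ ^ 2 + 0 * (inner ℝ (0:EuclideanSpace ℝ (Fin n)) v : ℝ))) :=
      GaussianFourier.integrable_cexp_neg_mul_sq_norm_add (by norm_num) 0 0
    have := hc.re
    apply this.congr
    filter_upwards with v
    simp only [zero_mul, add_zero]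
    rw [show (-(2⁻¹:ℂ) * (‖v‖:ℂ) ^ 2) = ((-(2⁻¹:ℝ) * ‖v‖ ^ 2 : ℝ) : ℂ) by push_cast; ring]
    rw [← Complex.ofReal_exp]
    rfl
  have heq : ∫ x : EuclideanSpace ℝ (Fin n), Real.exp (-(2⁻¹:ℝ) * ‖x‖ ^ 2)
      = (2 * π) ^ ((n : ℝ) / 2) := by
    rw [GaussianFourier.integral_rexp_neg_mul_sq_norm (by norm_num : (0:ℝ) < 2⁻¹)]
    rw [finrank_euclideanSpace_fin]
    rw [show π / 2⁻¹ = 2 * π by ring]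
  calc ∫⁻ x : EuclideanSpace ℝ (Fin n), ENNReal.ofReal (Real.exp (-‖x‖ ^ 2 / 2))
      = ∫⁻ x : EuclideanSpace ℝ (Fin n), ENNReal.ofReal (Real.exp (-(2⁻¹:ℝ) * ‖x‖ ^ 2)) := by
        apply lintegral_congr
        intro x
        congr 1
        ring_nf
    _ = ENNReal.ofReal (∫ x : EuclideanSpace ℝ (Fin n), Real.exp (-(2⁻¹:ℝ) * ‖x‖ ^ 2)) :=
        (ofReal_integral_eq_lintegral_ofReal hint
          (ae_of_all _ fun x => (Real.exp_pos _).le)).symm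
    _ = ENNReal.ofReal ((2 * π) ^ ((n : ℝ) / 2)) := by rw [heq]

theorem measure_thickening_ge (n : ℕ) (ε : ℝ) (hε : 0 < ε)
    (K : Set (EuclideanSpace ℝ (Fin n))) (hK : MeasurableSet K)
    (hm : ENNReal.ofReal (Real.exp (-ε * n)) ≤ gaussian n K) :
    ENNReal.ofReal (1 - Real.exp (-ε * n)) ≤
      gaussian n (Metric.cthickening (3 * Real.sqrt (ε * n)) K) := by
  classical
  set δ := 3 * Real.sqrt (ε * n) with hδdef
  have hεn : 0 ≤ ε * n := by positivity
  have hδ0 : 0 ≤ δ := by positivity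
  have hδsq : δ ^ 2 = 9 * (ε * n) := by
    rw [hδdef, mul_pow, sq_sqrt hεn]; norm_num
  -- K nonempty
  have hKne : K.Nonempty := by
    by_contra hne
    rw [Set.not_nonempty_iff_eq_empty] at hne
    rw [hne, measure_empty, nonpos_iff_eq_zero, ENNReal.ofReal_eq_zero] at hm
    exact absurd hm (not_le.mpr (Real.exp_pos _))
  set D : EuclideanSpace ℝ (Fin n) → ℝ := fun x => Metric.infDist x K with hDdef
  have hDcont : Continuous D := Metric.continuous_infDist_pt K
  set f : EuclideanSpace ℝ (Fin n) → ℝ≥0∞ := fun x => ENNReal.ofReal (Real.exp (D x ^ 2 / 4 - ‖x‖ ^ 2 / 2)) with hfdef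
  set h : EuclideanSpace ℝ (Fin n) → ℝ≥0∞ := fun x => ENNReal.ofReal (Real.exp (-‖x‖ ^ 2 / 2)) with hhdef
  set g : EuclideanSpace ℝ (Fin n) → ℝ≥0∞ := K.indicator h with hgdef
  have hfm : Measurable f := by
    apply Measurable.ennreal_ofReal
    apply Continuous.measurable
    continuity
  have hhm : Measurable h := by
    apply Measurable.ennreal_ofReal
    apply Continuous.measurable
    continuity
  have hgm : Measurable g := hhm.indicator hK
  -- the PL hypothesis
  have hyp : ∀ x y, f x * g y ≤ h ((2:ℝ)⁻¹ • (x + y)) ^ 2 := by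
    intro x y
    by_cases hy : y ∈ K
    · rw [hgdef, Set.indicator_of_mem hy, hfdef, hhdef]
      rw [← ENNReal.ofReal_mul (Real.exp_pos _).le, ← Real.exp_add]
      rw [← ENNReal.ofReal_pow (Real.exp_pos _).le, ← Real.exp_nat_mul]
      apply ENNReal.ofReal_le_ofReal
      apply Real.exp_le_exp.mpr
      have hnorm : ‖(2:ℝ)⁻¹ • (x + y)‖ ^ 2 = (1/4) * ‖x + y‖ ^ 2 := by
        rw [norm_smul, norm_inv, Real.norm_two]
        ring
      have hpar : ‖x + y‖ * ‖x + y‖ + ‖x - y‖ * ‖x - y‖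
          = 2 * (‖x‖ * ‖x‖ + ‖y‖ * ‖y‖) := by simpa only [sq] using parallelogram_law_with_norm ℝ x y
      have hDle : D x ≤ ‖x - y‖ := by
        rw [hDdef]
        have := Metric.infDist_le_dist_of_mem (x := x) hy
        rwa [dist_eq_norm] at this
      have hD0 : 0 ≤ D x := Metric.infDist_nonneg
      have hDsq : D x ^ 2 ≤ ‖x - y‖ ^ 2 := by
        apply pow_le_pow_left₀ hD0 hDle
      rw [hnorm]
      nlinarith [sq_nonneg (‖x + y‖), sq_nonneg (‖x - y‖)]
    · rw [hgdef, Set.indicator_of_notMem hy, mul_zero]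
      exact bot_le
  -- apply PL
  have PL := plprop_euclidean n f g h hfm hgm hhm hyp
  -- normalization constant
  set cst := ENNReal.ofReal ((2 * π) ^ (-(n:ℝ)/2)) with hcstdef
  have hrpow_pos : (0:ℝ) < (2 * π) ^ (-(n:ℝ)/2) := Real.rpow_pos_of_pos (by positivity) _
  have hcst0 : cst ≠ 0 := by
    rw [hcstdef, ne_eq, ENNReal.ofReal_eq_zero, not_le]
    exact hrpow_pos
  have hcsttop : cst ≠ ⊤ := ENNReal.ofReal_ne_top
  have hgauss : ∀ S : Set (EuclideanSpace ℝ (Fin n)), MeasurableSet S →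
      gaussian n S = cst * ∫⁻ x in S, h x := by
    intro S hS
    rw [gaussian, withDensity_apply _ hS, ← lintegral_const_mul cst hhm]
    apply lintegral_congr
    intro x
    rw [hhdef, hcstdef, ← ENNReal.ofReal_mul hrpow_pos.le]
  have hZ := lintegral_gauss n
  have hnorm1 : cst * ENNReal.ofReal ((2 * π) ^ ((n:ℝ)/2)) = 1 := by
    rw [hcstdef, ← ENNReal.ofReal_mul hrpow_pos.le, ← Real.rpow_add (by positivity)]
    rw [show -(n:ℝ)/2 + (n:ℝ)/2 = 0 by ring, Real.rpow_zero, ENNReal.ofReal_one]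
  have huniv : gaussian n Set.univ = 1 := by
    rw [hgauss Set.univ MeasurableSet.univ, Measure.restrict_univ]
    rw [show ∫⁻ x, h x = ENNReal.ofReal ((2 * π) ^ ((n:ℝ)/2)) from hZ, hnorm1]
  set B := (Metric.cthickening δ K)ᶜ with hBdef
  have hBm : MeasurableSet B := (Metric.isClosed_cthickening).measurableSet.compl
  set Eδ := ENNReal.ofReal (Real.exp (δ ^ 2 / 4)) with hEδdef
  -- lower bound for f on B
  have hfB : ∀ x ∈ B, Eδ * h x ≤ f x := by
    intro x hx
    have hDx : δ ≤ D x := by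
      rw [hBdef, Set.mem_compl_iff, Metric.mem_cthickening_iff, not_le] at hx
      have h1 : ((ENNReal.ofReal δ).toReal : ℝ) ≤ (EMetric.infEdist x K).toReal :=
        ENNReal.toReal_mono (Metric.infEdist_ne_top hKne) hx.le
      rwa [ENNReal.toReal_ofReal hδ0] at h1
    rw [hfdef, hhdef, hEδdef, ← ENNReal.ofReal_mul (Real.exp_pos _).le, ← Real.exp_add]
    apply ENNReal.ofReal_le_ofReal
    apply Real.exp_le_exp.mpr
    have hsq : δ ^ 2 ≤ D x ^ 2 := pow_le_pow_left₀ hδ0 hDx 2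
    linarith
  have hintfB : Eδ * ∫⁻ x in B, h x ≤ ∫⁻ x, f x :=
    calc Eδ * ∫⁻ x in B, h x = ∫⁻ x in B, Eδ * h x := (lintegral_const_mul Eδ hhm).symm
      _ ≤ ∫⁻ x in B, f x := setLIntegral_mono hfm hfB
      _ ≤ ∫⁻ x, f x := setLIntegral_le_lintegral B f
  have hintg : ∫⁻ y, g y = ∫⁻ y in K, h y := by
    rw [hgdef, lintegral_indicator hK]
  -- key inequality
  have key : Eδ * gaussian n B * gaussian n K ≤ 1 := by
    calc Eδ * gaussian n B * gaussian n K
        = (cst * (Eδ * ∫⁻ x in B, h x)) * (cst * ∫⁻ y in K, h y) := by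
          rw [hgauss B hBm, hgauss K hK]; ring
      _ ≤ (cst * ∫⁻ x, f x) * (cst * ∫⁻ y, g y) := by
          apply mul_le_mul'
          · exact mul_le_mul_right hintfB cst
          · rw [hintg]
      _ = cst ^ 2 * ((∫⁻ x, f x) * ∫⁻ y, g y) := by ring
      _ ≤ cst ^ 2 * (∫⁻ z, h z) ^ 2 := mul_le_mul_right PL _
      _ = (cst * ∫⁻ z, h z) ^ 2 := by ring
      _ = 1 := by rw [show ∫⁻ z, h z = ENNReal.ofReal ((2 * π) ^ ((n:ℝ)/2)) from hZ,
          hnorm1, one_pow]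
  -- bound on B
  have hBbound : gaussian n B ≤ ENNReal.ofReal (Real.exp (-ε * n)) := by
    set X := ENNReal.ofReal (Real.exp (δ ^ 2 / 4 - ε * n)) with hXdef
    have hX0 : X ≠ 0 := by
      rw [hXdef, ne_eq, ENNReal.ofReal_eq_zero, not_le]
      exact Real.exp_pos _
    have hXtop : X ≠ ⊤ := ENNReal.ofReal_ne_top
    have hsc : X = Eδ * ENNReal.ofReal (Real.exp (-ε * n)) := by
      rw [hXdef, show δ ^ 2 / 4 - ε * (n:ℝ) = δ ^ 2 / 4 + (-ε * n) by ring, Real.exp_add,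
        ENNReal.ofReal_mul (Real.exp_pos _).le, ← hEδdef]
    have hXB : X * gaussian n B ≤ 1 := by
      calc X * gaussian n B
          = Eδ * gaussian n B * ENNReal.ofReal (Real.exp (-ε * n)) := by
            rw [hsc]; ring
        _ ≤ Eδ * gaussian n B * gaussian n K := mul_le_mul_right hm _
        _ ≤ 1 := key
    have h4 : gaussian n B ≤ X⁻¹ := by
      calc gaussian n B = X⁻¹ * (X * gaussian n B) := by
            rw [← mul_assoc, ENNReal.inv_mul_cancel hX0 hXtop, one_mul]
        _ ≤ X⁻¹ * 1 := mul_le_mul_right hXB _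
        _ = X⁻¹ := mul_one _
    have h5 : X⁻¹ = ENNReal.ofReal (Real.exp (-(δ ^ 2 / 4 - ε * n))) := by
      rw [hXdef, ← ENNReal.ofReal_inv_of_pos (Real.exp_pos _), ← Real.exp_neg]
    refine le_trans h4 (le_trans (le_of_eq h5) ?_)
    apply ENNReal.ofReal_le_ofReal
    apply Real.exp_le_exp.mpr
    rw [hδsq]
    linarith
  -- conclude
  have hcompl : gaussian n (Metric.cthickening δ K) = 1 - gaussian n B := by
    have hBfin : gaussian n B ≠ ⊤ := by
      have hle : gaussian n B ≤ 1 := huniv ▸ measure_mono (Set.subset_univ B)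
      exact ne_top_of_le_ne_top ENNReal.one_ne_top hle
    have := measure_compl hBm hBfin
    rw [hBdef, compl_compl] at this
    rw [this, huniv, hBdef]
  rw [hcompl, ENNReal.ofReal_sub _ (Real.exp_pos _).le, ENNReal.ofReal_one]
  exact tsub_le_tsub le_rfl hBbound
end

section
/- Let 0 < ε ≤ 1/9000 and δ := (3/2) ε log₂(1/ε). Let K ⊆ ℝⁿ be a symmetric closed convex body with γₙ(K) ≥ e^{-δn}. Then for n sufficiently large, there exists a point y ∈ K ∩ [-1,1]ⁿ with yᵢ ∈ {-1,1} for at least εn coordinates i. -/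
open MeasureTheory Real
open scoped ENNReal

lemma gauss_translate {n : ℕ} {K : Set (EuclideanSpace ℝ (Fin n))} (hK : MeasurableSet K)
    (x : EuclideanSpace ℝ (Fin n)) :
    gaussian n ((fun z => z - x) ⁻¹' K)
      = ∫⁻ y in K, ENNReal.ofReal ((2 * π) ^ (-(n : ℝ) / 2) * Real.exp (-‖y + x‖ ^ 2 / 2)) := by
  have hS : MeasurableSet ((fun z => z - x) ⁻¹' K) :=
    (measurable_sub_const x) hK
  rw [gaussian, withDensity_apply _ hS]
  have hmp : MeasurePreserving (fun y : EuclideanSpace ℝ (Fin n) => y + x) volume volume :=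
    measurePreserving_add_right volume x
  have h2 := hmp.setLIntegral_comp_preimage_emb (MeasurableEquiv.addRight x).measurableEmbedding
    (fun z => ENNReal.ofReal ((2 * π) ^ (-(n : ℝ) / 2) * Real.exp (-‖z‖ ^ 2 / 2)))
    ((fun z => z - x) ⁻¹' K)
  have h3 : (fun y : EuclideanSpace ℝ (Fin n) => y + x) ⁻¹' ((fun z => z - x) ⁻¹' K) = K := by
    ext y; simp
  rw [h3] at h2
  rw [← h2]

lemma gauss_univ (n : ℕ) : gaussian n Set.univ = 1 := by
  rw [gaussian, withDensity_apply _ MeasurableSet.univ, setLIntegral_univ]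
  have hC : (0:ℝ) ≤ (2 * π) ^ (-(n : ℝ) / 2) := by positivity
  have hint : Integrable (fun v : EuclideanSpace ℝ (Fin n) => rexp (- (1/2 : ℝ) * ‖v‖^2)) := by
    have h := (GaussianFourier.integrable_cexp_neg_mul_sq_norm_add (V := EuclideanSpace ℝ (Fin n))
        (b := (1/2 : ℂ)) (by norm_num) 0 0).norm
    refine h.congr ?_
    filter_upwards with v
    simp [Complex.norm_exp]
    norm_cast
  calc ∫⁻ v : EuclideanSpace ℝ (Fin n),
        ENNReal.ofReal ((2 * π) ^ (-(n : ℝ) / 2) * rexp (-‖v‖ ^ 2 / 2))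
      = ∫⁻ v : EuclideanSpace ℝ (Fin n),
        ENNReal.ofReal ((2 * π) ^ (-(n : ℝ) / 2)) * ENNReal.ofReal (rexp (- (1/2:ℝ) * ‖v‖ ^ 2)) := by
        congr 1; ext v
        rw [← ENNReal.ofReal_mul hC]
        ring_nf
    _ = ENNReal.ofReal ((2 * π) ^ (-(n : ℝ) / 2)) *
        ENNReal.ofReal (∫ v : EuclideanSpace ℝ (Fin n), rexp (- (1/2:ℝ) * ‖v‖ ^ 2)) := by
        rw [lintegral_const_mul _ ((Continuous.measurable (by continuity)).ennreal_ofReal),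
          ← ofReal_integral_eq_lintegral_ofReal hint
            (by filter_upwards with v using (Real.exp_pos _).le)]
    _ = 1 := by
        rw [GaussianFourier.integral_rexp_neg_mul_sq_norm (by norm_num)]
        rw [← ENNReal.ofReal_mul hC]
        rw [ENNReal.ofReal_eq_one]
        have : (π / (1/2:ℝ)) = 2 * π := by ring
        rw [this, ← Real.rpow_add (by positivity), finrank_euclideanSpace_fin,
          show -(n:ℝ)/2 + (n:ℝ)/2 = 0 by ring, Real.rpow_zero]

lemma dens_meas (n : ℕ) (x : EuclideanSpace ℝ (Fin n)) :
    Measurable (fun y : EuclideanSpace ℝ (Fin n) =>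
      ENNReal.ofReal ((2 * π) ^ (-(n : ℝ) / 2) * Real.exp (-‖y + x‖ ^ 2 / 2))) :=
  (Continuous.measurable (by continuity)).ennreal_ofReal

lemma gauss_pair {n : ℕ} {K : Set (EuclideanSpace ℝ (Fin n))} (hK : MeasurableSet K)
    {x : EuclideanSpace ℝ (Fin n)} (hx : ‖x‖^2 = (n:ℝ)) :
    ENNReal.ofReal (2 * rexp (-(n:ℝ)/2)) * gaussian n K ≤
      gaussian n ((fun z => z - x) ⁻¹' K) + gaussian n ((fun z => z - (-x)) ⁻¹' K) := by
  have hmeas0 : Measurable (fun y : EuclideanSpace ℝ (Fin n) =>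
      ENNReal.ofReal ((2 * π) ^ (-(n : ℝ) / 2) * Real.exp (-‖y‖ ^ 2 / 2))) :=
    (Continuous.measurable (by continuity)).ennreal_ofReal
  rw [gauss_translate hK x, gauss_translate hK (-x), gaussian, withDensity_apply _ hK,
    ← lintegral_const_mul _ hmeas0, ← lintegral_add_left (dens_meas n x)]
  refine lintegral_mono fun y => ?_
  rw [← ENNReal.ofReal_mul (by positivity), ← ENNReal.ofReal_add (by positivity) (by positivity)]
  apply ENNReal.ofReal_le_ofReal
  have hC : (0:ℝ) ≤ (2 * π) ^ (-(n : ℝ) / 2) := by positivity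
  have ha : ‖y + x‖^2 = ‖y‖^2 + 2*(inner ℝ y x:ℝ) + (n:ℝ) := by
    rw [@norm_add_sq_real, hx]
  have hb : ‖y + -x‖^2 = ‖y‖^2 - 2*(inner ℝ y x:ℝ) + (n:ℝ) := by
    rw [← sub_eq_add_neg, @norm_sub_sq_real, hx]
  rw [ha, hb]
  set A := ‖y‖^2 with hA
  set t : ℝ := (inner ℝ y x : ℝ) with ht
  have e1 : rexp (-(A + 2*t + n)/2) = rexp (-A/2) * rexp (-(n:ℝ)/2) * rexp (-t) := by
    rw [← Real.exp_add, ← Real.exp_add]; congr 1; ring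
  have e2 : rexp (-(A - 2*t + n)/2) = rexp (-A/2) * rexp (-(n:ℝ)/2) * rexp t := by
    rw [← Real.exp_add, ← Real.exp_add]; congr 1; ring
  have hcosh : 2 ≤ rexp t + rexp (-t) := by
    have h := Real.one_le_cosh t
    rw [Real.cosh_eq] at h
    linarith
  have hkey := mul_le_mul_of_nonneg_left hcosh
    (show (0:ℝ) ≤ (2 * π) ^ (-(n : ℝ) / 2) * rexp (-A/2) * rexp (-(n:ℝ)/2) by positivity)
  rw [e1, e2]
  nlinarith [hkey]


open Finset in
lemma ball_card (n m : ℕ) (s₀ : Finset (Fin n)) :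
    (Finset.univ.filter fun t : Finset (Fin n) => (symmDiff s₀ t).card ≤ m).card
      ≤ ∑ k ∈ Finset.range (m+1), n.choose k := by
  classical
  have hinj : Set.InjOn (fun t => symmDiff s₀ t)
      ((Finset.univ.filter fun t : Finset (Fin n) => (symmDiff s₀ t).card ≤ m) : Finset _) := by
    intro a _ b _ hab
    exact symmDiff_right_injective s₀ hab
  have hsub : ∀ t ∈ (Finset.univ.filter fun t : Finset (Fin n) => (symmDiff s₀ t).card ≤ m),
      symmDiff s₀ t ∈ (Finset.range (m+1)).biUnion (fun k => Finset.powersetCard k Finset.univ) := by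
    intro t ht
    rw [Finset.mem_filter] at ht
    rw [Finset.mem_biUnion]
    exact ⟨(symmDiff s₀ t).card, Finset.mem_range.mpr (Nat.lt_succ_of_le ht.2),
      Finset.mem_powersetCard.mpr ⟨Finset.subset_univ _, rfl⟩⟩
  calc (Finset.univ.filter fun t : Finset (Fin n) => (symmDiff s₀ t).card ≤ m).card
      ≤ ((Finset.range (m+1)).biUnion (fun k => Finset.powersetCard k Finset.univ)).card :=
        Finset.card_le_card_of_injOn _ hsub hinj
    _ ≤ ∑ k ∈ Finset.range (m+1), (Finset.powersetCard k (Finset.univ : Finset (Fin n))).card :=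
        Finset.card_biUnion_le
    _ = ∑ k ∈ Finset.range (m+1), n.choose k := by
        refine Finset.sum_congr rfl fun k _ => ?_
        rw [Finset.card_powersetCard, Finset.card_univ, Fintype.card_fin]

lemma binom_bound (n m : ℕ) (hmn : m ≤ n) :
    ((∑ k ∈ Finset.range (m+1), n.choose k : ℕ) : ℝ) ≤ 16^m * (17/16)^n := by
  push_cast
  have step1 : ∑ k ∈ Finset.range (m+1), (n.choose k : ℝ)
      ≤ 16^m * ∑ k ∈ Finset.range (m+1), (n.choose k : ℝ) * (1/16)^k := by
    rw [Finset.mul_sum]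
    refine Finset.sum_le_sum fun k hk => ?_
    have hk' : k ≤ m := Nat.lt_succ_iff.mp (Finset.mem_range.mp hk)
    have h16 : (16:ℝ)^k ≤ 16^m := pow_le_pow_right₀ (by norm_num) hk'
    have hpos : (0:ℝ) < 16^k := by positivity
    have e : (16:ℝ)^m * ((n.choose k : ℝ) * (1/16)^k) = (n.choose k : ℝ) * (16^m / 16^k) := by
      rw [one_div, inv_pow]; field_simp
    rw [e]
    exact le_mul_of_one_le_right (by positivity) ((one_le_div hpos).mpr h16)
  have step2 : ∑ k ∈ Finset.range (m+1), (n.choose k : ℝ) * (1/16)^k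
      ≤ ∑ k ∈ Finset.range (n+1), (n.choose k : ℝ) * (1/16)^k := by
    refine Finset.sum_le_sum_of_subset_of_nonneg
      (Finset.range_subset_range.mpr (Nat.succ_le_succ hmn)) fun k _ _ => by positivity
  have step3 : ∑ k ∈ Finset.range (n+1), (n.choose k : ℝ) * (1/16)^k = (17/16)^n := by
    have h := add_pow (R := ℝ) (1/16) 1 n
    rw [show (1/16 + 1 : ℝ) = 17/16 by norm_num] at h
    rw [h]
    refine Finset.sum_congr rfl fun k _ => by ring
  calc ∑ k ∈ Finset.range (m+1), (n.choose k : ℝ)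
      ≤ 16^m * ∑ k ∈ Finset.range (m+1), (n.choose k : ℝ) * (1/16)^k := step1
    _ ≤ 16^m * ∑ k ∈ Finset.range (n+1), (n.choose k : ℝ) * (1/16)^k := by
        refine mul_le_mul_of_nonneg_left step2 (by positivity)
    _ = 16^m * (17/16)^n := by rw [step3]

lemma key_numeric (ε : ℝ) (hε0 : 0 < ε) (hε : ε ≤ 1 / 9000)
    (δ : ℝ) (hδ : δ = (3 / 2) * ε * Real.logb 2 (1 / ε)) :
    ε * Real.log 16 + Real.log (17/16) + 1/2 + δ < Real.log 2 := by
  have hl2lt : Real.log 2 < 0.6931471808 := Real.log_two_lt_d9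
  have hl2gt : 0.6931471803 < Real.log 2 := Real.log_two_gt_d9
  have hlog1716 : Real.log (17/16) ≤ 1/16 := by
    have := Real.log_le_sub_one_of_pos (show (0:ℝ) < 17/16 by norm_num)
    linarith
  have hlog16 : Real.log 16 = 4 * Real.log 2 := by
    rw [show (16:ℝ) = 2^4 by norm_num, Real.log_pow]
    norm_num
  have hεlog16 : ε * Real.log 16 ≤ (1/9000) * (4 * 0.6931471808) := by
    rw [hlog16]
    have h4 : 4 * Real.log 2 ≤ 4 * 0.6931471808 := by linarith
    have : ε * (4 * Real.log 2) ≤ (1/9000) * (4 * Real.log 2) :=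
      mul_le_mul_of_nonneg_right hε (by linarith)
    calc ε * (4 * Real.log 2) ≤ (1/9000) * (4 * Real.log 2) := this
      _ ≤ (1/9000) * (4 * 0.6931471808) := by linarith
  -- bound on δ
  have hsqrt_pos : 0 < Real.sqrt ε := Real.sqrt_pos.mpr hε0
  have hsqε : Real.sqrt ε * Real.sqrt ε = ε := Real.mul_self_sqrt hε0.le
  have hlog_inv : Real.log (1/ε) ≤ 2 / Real.sqrt ε := by
    have he : (1/Real.sqrt ε)^2 = 1/ε := by
      rw [div_pow, one_pow, sq]
      rw [hsqε]
    have h1 : Real.log (1/ε) = 2 * Real.log (1/Real.sqrt ε) := by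
      rw [← he, Real.log_pow]
      norm_num
    have h2 : Real.log (1/Real.sqrt ε) ≤ 1/Real.sqrt ε - 1 :=
      Real.log_le_sub_one_of_pos (by positivity)
    rw [h1]
    have : 1/Real.sqrt ε - 1 ≤ 1/Real.sqrt ε := by linarith
    calc 2 * Real.log (1/Real.sqrt ε) ≤ 2 * (1/Real.sqrt ε) := by linarith
      _ = 2 / Real.sqrt ε := by ring
  have hεlog : ε * Real.log (1/ε) ≤ 2 * Real.sqrt ε := by
    have := mul_le_mul_of_nonneg_left hlog_inv hε0.le
    calc ε * Real.log (1/ε) ≤ ε * (2 / Real.sqrt ε) := this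
      _ = 2 * Real.sqrt ε := by
          field_simp
          nlinarith [hsqε]
  have hsqrt94 : Real.sqrt ε ≤ 1/94 := by
    have h1 : ε ≤ (1/94)^2 := by norm_num at *; nlinarith
    calc Real.sqrt ε ≤ Real.sqrt ((1/94)^2) := Real.sqrt_le_sqrt h1
      _ = 1/94 := Real.sqrt_sq (by norm_num)
  have hεlog47 : ε * Real.log (1/ε) ≥ 0 := by
    have : 0 ≤ Real.log (1/ε) := Real.log_nonneg (by rw [le_div_iff₀ hε0]; linarith)
    positivity
  have hδle : δ ≤ ((3/2) * (1/47)) / 0.6931471803 := by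
    have hnum : (3/2) * (ε * Real.log (1/ε)) ≤ (3/2) * (1/47) := by
      have : ε * Real.log (1/ε) ≤ 1/47 := by
        calc ε * Real.log (1/ε) ≤ 2 * Real.sqrt ε := hεlog
          _ ≤ 2 * (1/94) := by linarith
          _ = 1/47 := by norm_num
      linarith
    have he : δ = ((3/2) * (ε * Real.log (1/ε))) / Real.log 2 := by
      rw [hδ, Real.logb]; ring
    rw [he]
    exact div_le_div₀ (by norm_num) hnum (by norm_num) (by linarith)
  have hδnum : δ ≤ 0.04605 := by
    calc δ ≤ ((3/2) * (1/47)) / 0.6931471803 := hδle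
      _ ≤ 0.04605 := by norm_num
  linarith

theorem main_partial_coloring (ε : ℝ) (hε0 : 0 < ε) (hε : ε ≤ 1 / 9000)
    (δ : ℝ) (hδ : δ = (3 / 2) * ε * Real.logb 2 (1 / ε)) :
    ∃ N : ℕ, ∀ n ≥ N, ∀ K : Set (EuclideanSpace ℝ (Fin n)),
      IsClosed K → (∀ x ∈ K, -x ∈ K) → Convex ℝ K →
      ENNReal.ofReal (Real.exp (-δ * n)) ≤ gaussian n K →
      ∃ y ∈ K, (∀ i, |y i| ≤ 1) ∧
        ε * n ≤ (Finset.univ.filter fun i => y i = 1 ∨ y i = -1).card := by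
  classical
  use 1
  intro n hn K hKcl hKsym hKconv hKγ
  have hKm : MeasurableSet K := hKcl.measurableSet
  -- the ±1 vectors
  set v : Finset (Fin n) → EuclideanSpace ℝ (Fin n) :=
    fun s => WithLp.toLp 2 (fun i => if i ∈ s then (1:ℝ) else -1) with hv
  have hvapp : ∀ s i, v s i = if i ∈ s then (1:ℝ) else -1 := fun s i => rfl
  have hvsq : ∀ s, ‖v s‖^2 = (n:ℝ) := by
    intro s
    rw [EuclideanSpace.norm_eq, Real.sq_sqrt (by positivity)]
    have h1 : ∀ i, (v s i)^2 = 1 := by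
      intro i
      rw [hvapp]
      by_cases h : i ∈ s <;> simp [h]
    simp [h1, Finset.sum_const, Finset.card_univ]
  have hvcompl : ∀ s, v sᶜ = -(v s) := by
    intro s
    ext i
    show (if i ∈ sᶜ then (1:ℝ) else -1) = -(v s i)
    rw [hvapp]
    by_cases h : i ∈ s <;> simp [h]
  -- translated sets
  set A : Finset (Fin n) → Set (EuclideanSpace ℝ (Fin n)) :=
    fun s => (fun z => z - v s) ⁻¹' K with hA
  have hAm : ∀ s, MeasurableSet (A s) := fun s => (measurable_sub_const (v s)) hKm
  have hAcompl : ∀ s, A sᶜ = (fun z => z - -(v s)) ⁻¹' K := by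
    intro s; rw [hA]; simp only [hvcompl]
  -- sum lower bound
  have hpair : ∀ s, ENNReal.ofReal (2 * rexp (-(n:ℝ)/2)) * gaussian n K
      ≤ gaussian n (A s) + gaussian n (A sᶜ) := by
    intro s
    rw [hAcompl s]
    exact gauss_pair hKm (hvsq s)
  have hcomplsum : ∑ s : Finset (Fin n), gaussian n (A sᶜ)
      = ∑ s : Finset (Fin n), gaussian n (A s) :=
    Fintype.sum_bijective compl compl_involutive.bijective _ _ (fun s => rfl)
  have hcard2n : (Finset.univ : Finset (Finset (Fin n))).card = 2^n := by
    rw [Finset.card_univ, Fintype.card_finset, Fintype.card_fin]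
  have h2S : (2^n : ℕ) • (ENNReal.ofReal (2 * rexp (-(n:ℝ)/2)) * gaussian n K)
      ≤ ∑ s : Finset (Fin n), (gaussian n (A s) + gaussian n (A sᶜ)) := by
    rw [← hcard2n]
    exact Finset.card_nsmul_le_sum _ _ _ (fun s _ => hpair s)
  have hS : (2:ℝ≥0∞)^n * ENNReal.ofReal (rexp (-(n:ℝ)/2)) * gaussian n K
      ≤ ∑ s : Finset (Fin n), gaussian n (A s) := by
    rw [Finset.sum_add_distrib, hcomplsum, ← two_mul] at h2S
    rw [nsmul_eq_mul] at h2S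
    push_cast at h2S
    have h2S' : 2 * ((2:ℝ≥0∞)^n * ENNReal.ofReal (rexp (-(n:ℝ)/2)) * gaussian n K)
        ≤ 2 * ∑ s : Finset (Fin n), gaussian n (A s) := by
      calc 2 * ((2:ℝ≥0∞)^n * ENNReal.ofReal (rexp (-(n:ℝ)/2)) * gaussian n K)
          = (2:ℝ≥0∞)^n * (ENNReal.ofReal 2 * ENNReal.ofReal (rexp (-(n:ℝ)/2)) * gaussian n K) := by
            rw [ENNReal.ofReal_ofNat]; ring
        _ = (2:ℝ≥0∞)^n * (ENNReal.ofReal (2 * rexp (-(n:ℝ)/2)) * gaussian n K) := by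
            rw [ENNReal.ofReal_mul (by norm_num)]
        _ ≤ 2 * ∑ s : Finset (Fin n), gaussian n (A s) := h2S
    exact (ENNReal.mul_le_mul_iff_right (by norm_num) (by norm_num)).mp h2S'
  -- counting setup
  set m : ℕ := ⌊ε * n⌋₊ with hm
  set B : ℕ := ∑ k ∈ Finset.range (m+1), n.choose k with hB
  have hn1 : (1:ℝ) ≤ (n:ℝ) := by exact_mod_cast hn
  have hmεn : (m:ℝ) ≤ ε * n := Nat.floor_le (by positivity)
  have hεnm : ε * n < (m:ℝ) + 1 := Nat.lt_floor_add_one _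
  have hmn : m ≤ n := by
    have : ε * n ≤ (n:ℝ) := by nlinarith
    calc m = ⌊ε * n⌋₊ := rfl
      _ ≤ ⌊(n:ℝ)⌋₊ := Nat.floor_le_floor this
      _ = n := Nat.floor_natCast n
  -- numeric bound : B < 2^n * exp(-n/2) * exp(-δn)
  have hnum : (B:ℝ) < 2^n * (rexp (-(n:ℝ)/2) * rexp (-δ * n)) := by
    have h1 : (B:ℝ) ≤ 16^m * (17/16)^n := binom_bound n m hmn
    have hkey := key_numeric ε hε0 hε δ hδ
    have e16 : (16:ℝ)^m = rexp (m * Real.log 16) := by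
      rw [← Real.log_pow, Real.exp_log (by positivity)]
    have e1716 : ((17:ℝ)/16)^n = rexp (n * Real.log (17/16)) := by
      rw [← Real.log_pow, Real.exp_log (by positivity)]
    have e2 : (2:ℝ)^n = rexp (n * Real.log 2) := by
      rw [← Real.log_pow, Real.exp_log (by positivity)]
    have hlog16nn : (0:ℝ) ≤ Real.log 16 := Real.log_nonneg (by norm_num)
    have hmε : (m:ℝ) * Real.log 16 ≤ ε * n * Real.log 16 :=
      mul_le_mul_of_nonneg_right hmεn hlog16nn
    have hstrict : ε * n * Real.log 16 + n * Real.log (17/16)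
        < n * Real.log 2 + (-(n:ℝ)/2 + -δ * n) := by
      nlinarith [hkey, hn1]
    calc (B:ℝ) ≤ 16^m * (17/16)^n := h1
      _ = rexp (m * Real.log 16 + n * Real.log (17/16)) := by
          rw [e16, e1716, Real.exp_add]
      _ < rexp (n * Real.log 2 + (-(n:ℝ)/2 + -δ * n)) := by
          apply Real.exp_lt_exp.mpr
          linarith
      _ = 2^n * (rexp (-(n:ℝ)/2) * rexp (-δ * n)) := by
          rw [Real.exp_add, Real.exp_add, e2]
  -- pigeonhole: find z hit by many translates
  have hz : ∃ z, (B:ℕ) < (Finset.univ.filter fun s : Finset (Fin n) => z ∈ A s).card := by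
    by_contra hcon
    push_neg at hcon
    have hle : ∑ s : Finset (Fin n), gaussian n (A s) ≤ (B : ℝ≥0∞) := by
      have heq : ∑ s : Finset (Fin n), gaussian n (A s)
          = ∫⁻ z, ∑ s : Finset (Fin n), (A s).indicator (fun _ => (1:ℝ≥0∞)) z ∂(gaussian n) := by
        rw [lintegral_finset_sum _ (fun s _ => measurable_const.indicator (hAm s))]
        exact Finset.sum_congr rfl fun s _ => (lintegral_indicator_one (hAm s)).symm
      rw [heq]
      calc ∫⁻ z, ∑ s : Finset (Fin n), (A s).indicator (fun _ => (1:ℝ≥0∞)) z ∂(gaussian n)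
          ≤ ∫⁻ _, (B:ℝ≥0∞) ∂(gaussian n) := by
            refine lintegral_mono fun z => ?_
            have hh : ∑ s : Finset (Fin n), (A s).indicator (fun _ => (1:ℝ≥0∞)) z
                = ((Finset.univ.filter fun s : Finset (Fin n) => z ∈ A s).card : ℝ≥0∞) := by
              rw [Finset.card_filter]
              push_cast
              refine Finset.sum_congr rfl fun s _ => ?_
              by_cases h : z ∈ A s <;> simp [h]
            rw [hh]
            exact Nat.cast_le.mpr (hcon z)
        _ = (B:ℝ≥0∞) := by rw [lintegral_const, gauss_univ, mul_one]
    have hlow : ENNReal.ofReal ((2:ℝ)^n * (rexp (-(n:ℝ)/2) * rexp (-δ * n))) ≤ (B:ℝ≥0∞) := by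
      calc ENNReal.ofReal ((2:ℝ)^n * (rexp (-(n:ℝ)/2) * rexp (-δ * n)))
          = (2:ℝ≥0∞)^n * (ENNReal.ofReal (rexp (-(n:ℝ)/2)) * ENNReal.ofReal (rexp (-δ * n))) := by
            rw [ENNReal.ofReal_mul (by positivity), ENNReal.ofReal_mul (by positivity),
              ENNReal.ofReal_pow (by norm_num), ENNReal.ofReal_ofNat]
        _ = (2:ℝ≥0∞)^n * ENNReal.ofReal (rexp (-(n:ℝ)/2)) * ENNReal.ofReal (rexp (-δ * n)) := by
            ring
        _ ≤ (2:ℝ≥0∞)^n * ENNReal.ofReal (rexp (-(n:ℝ)/2)) * gaussian n K :=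
            mul_le_mul_right hKγ _
        _ ≤ ∑ s : Finset (Fin n), gaussian n (A s) := hS
        _ ≤ (B:ℝ≥0∞) := hle
    rw [← ENNReal.ofReal_natCast B] at hlow
    have := (ENNReal.ofReal_le_ofReal_iff (by positivity)).mp hlow
    linarith
  obtain ⟨z, hzB⟩ := hz
  set T : Finset (Finset (Fin n)) := Finset.univ.filter fun s => z ∈ A s with hT
  have hTne : T.Nonempty := by
    rw [← Finset.card_pos]
    have : 1 ≤ B := by
      rw [hB]
      calc 1 = n.choose 0 := (Nat.choose_zero_right n).symm
        _ ≤ ∑ k ∈ Finset.range (m+1), n.choose k :=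
          Finset.single_le_sum (fun k _ => Nat.zero_le _) (Finset.mem_range.mpr (Nat.succ_pos m))
    omega
  obtain ⟨s₀, hs₀⟩ := hTne
  -- find t far from s₀ in T
  have hfar : ∃ t ∈ T, m < (symmDiff s₀ t).card := by
    by_contra hcon
    push_neg at hcon
    have hsub : T ⊆ Finset.univ.filter fun t : Finset (Fin n) => (symmDiff s₀ t).card ≤ m := by
      intro t ht
      exact Finset.mem_filter.mpr ⟨Finset.mem_univ t, hcon t ht⟩
    have := (Finset.card_le_card hsub).trans (ball_card n m s₀)
    omega
  obtain ⟨t, htT, htfar⟩ := hfar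
  have hzs₀ : z - v s₀ ∈ K := by
    have := Finset.mem_filter.mp hs₀
    exact this.2
  have hzt : z - v t ∈ K := by
    have := Finset.mem_filter.mp htT
    exact this.2
  -- construct y
  refine ⟨(2⁻¹ : ℝ) • (z - v s₀ - (z - v t)), ?_, ?_, ?_⟩
  · -- y ∈ K by convexity and symmetry
    have hneg : -(z - v t) ∈ K := hKsym _ hzt
    have := hKconv hzs₀ hneg (le_of_lt (by norm_num : (0:ℝ) < 2⁻¹))
      (le_of_lt (by norm_num : (0:ℝ) < 2⁻¹)) (by norm_num)
    convert this using 1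
    rw [← smul_add, sub_eq_add_neg]
  · -- coordinates bounded by 1
    intro i
    have : ((2⁻¹ : ℝ) • (z - v s₀ - (z - v t))) i = 2⁻¹ * (v t i - v s₀ i) := by
      simp [PiLp.smul_apply, PiLp.sub_apply, smul_eq_mul]
    rw [this, hvapp, hvapp]
    by_cases h1 : i ∈ s₀ <;> by_cases h2 : i ∈ t <;> simp [h1, h2] <;> norm_num
  · -- many ±1 coordinates
    have hsub : symmDiff s₀ t ⊆ Finset.univ.filter
        (fun i => ((2⁻¹ : ℝ) • (z - v s₀ - (z - v t))) i = 1
          ∨ ((2⁻¹ : ℝ) • (z - v s₀ - (z - v t))) i = -1) := by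
      intro i hi
      refine Finset.mem_filter.mpr ⟨Finset.mem_univ i, ?_⟩
      have happ : ((2⁻¹ : ℝ) • (z - v s₀ - (z - v t))) i = 2⁻¹ * (v t i - v s₀ i) := by
        simp [PiLp.smul_apply, PiLp.sub_apply, smul_eq_mul]
      rw [Finset.mem_symmDiff] at hi
      rcases hi with ⟨hi1, hi2⟩ | ⟨hi1, hi2⟩
      · right
        rw [happ, hvapp, hvapp, if_pos hi1, if_neg hi2]
        norm_num
      · left
        rw [happ, hvapp, hvapp, if_neg hi2, if_pos hi1]
        norm_num
    have hcard := Finset.card_le_card hsub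
    have hm1 : (m:ℝ) + 1 ≤ ((symmDiff s₀ t).card : ℝ) := by
      exact_mod_cast Nat.succ_le_of_lt htfar
    calc ε * n ≤ (m:ℝ) + 1 := le_of_lt hεnm
      _ ≤ ((symmDiff s₀ t).card : ℝ) := hm1
      _ ≤ _ := by exact_mod_cast hcard
end
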